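/- Let G be a just infinite profinite group and let H be a closed subgroup of G of finite index h. Then for all sufficiently large n, ob_G(hn) ≤ h · ob_H(n). -/

import Mathlib

/-- A topological group is just infinite if it is infinite and every nontrivial
closed normal subgroup has finite index. -/
def JustInfinite (G : Type*) [Group G] [TopologicalSpace G] : Prop :=
  Infinite G ∧ ∀ N : Subgroup G, N.Normal → IsClosed (N : Set G) → N ≠ ⊥ → N.FiniteIndex

/-- The oblique core `Ob_G(H) = H ∩ ⋂ {K ⊴_o G ∣ K ≰ H}`. -/
def obliqueCore {G : Type*} [Group G] [TopologicalSpace G] (H : Subgroup G) : Subgroup G :=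
  H ⊓ ⨅ (K : Subgroup G) (_ : K.Normal ∧ IsOpen (K : Set G) ∧ ¬ K ≤ H), K

/-- `I⊲_n(G)`: the intersection of all open normal subgroups of `G` of index at
most `n`. -/
def normalIndexCap (G : Type*) [Group G] [TopologicalSpace G] (n : ℕ) : Subgroup G :=
  ⨅ (K : Subgroup G) (_ : K.Normal ∧ IsOpen (K : Set G) ∧ K.index ≤ n), K

/-- `OI_n(G) = Ob_G(I⊲_n(G))`. -/
def OI (G : Type*) [Group G] [TopologicalSpace G] (n : ℕ) : Subgroup G :=
  obliqueCore (normalIndexCap G n)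

/-- The generalised obliquity function `ob_G(n) = |G : OI_n(G)|`, with values in
`Cardinal` so that infinite index is recorded faithfully. -/
noncomputable def obFun (G : Type*) [Group G] [TopologicalSpace G] (n : ℕ) : Cardinal :=
  Cardinal.mk (G ⧸ OI G n)

open scoped Pointwise

set_option linter.unusedSectionVars false
set_option linter.unusedVariables false

section Helpers

variable {G : Type*} [Group G] [TopologicalSpace G]

private lemma normal_biInf (P : Subgroup G → Prop) (hP : ∀ K, P K → K.Normal) :
    (⨅ (K : Subgroup G) (_ : P K), K).Normal := by
  constructor
  intro a ha g
  rw [Subgroup.mem_iInf] at ha ⊢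
  intro K
  rw [Subgroup.mem_iInf]
  intro hK
  exact (hP K hK).conj_mem a (Subgroup.mem_iInf.1 (ha K) hK) g

private lemma isClosed_biInf [ContinuousMul G] (P : Subgroup G → Prop)
    (hP : ∀ K, P K → IsOpen (K : Set G)) :
    IsClosed ((⨅ (K : Subgroup G) (_ : P K), K : Subgroup G) : Set G) := by
  rw [Subgroup.coe_iInf]
  refine isClosed_iInter fun K => ?_
  rw [Subgroup.coe_iInf]
  exact isClosed_iInter fun hK => Subgroup.isClosed_of_isOpen K (hP K hK)

private lemma normalIndexCap_le {n : ℕ} {K : Subgroup G} (h1 : K.Normal)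
    (h2 : IsOpen (K : Set G)) (h3 : K.index ≤ n) : normalIndexCap G n ≤ K :=
  iInf₂_le K ⟨h1, h2, h3⟩

private lemma normalIndexCap_anti {m n : ℕ} (hmn : m ≤ n) :
    normalIndexCap G n ≤ normalIndexCap G m :=
  le_iInf fun K => le_iInf fun hK => normalIndexCap_le hK.1 hK.2.1 (hK.2.2.trans hmn)

private lemma le_normalIndexCap {n : ℕ} {L : Subgroup G}
    (hL : ∀ K : Subgroup G, K.Normal → IsOpen (K : Set G) → K.index ≤ n → L ≤ K) :
    L ≤ normalIndexCap G n :=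
  le_iInf fun K => le_iInf fun hK => hL K hK.1 hK.2.1 hK.2.2

private lemma OI_le_cap (n : ℕ) : OI G n ≤ normalIndexCap G n := inf_le_left

private lemma OI_le_constraint {n : ℕ} {K : Subgroup G} (h1 : K.Normal)
    (h2 : IsOpen (K : Set G)) (h3 : ¬ K ≤ normalIndexCap G n) : OI G n ≤ K :=
  inf_le_right.trans (iInf₂_le K ⟨h1, h2, h3⟩)

private lemma le_OI {n : ℕ} {L : Subgroup G} (h0 : L ≤ normalIndexCap G n)
    (hL : ∀ K : Subgroup G, K.Normal → IsOpen (K : Set G) → ¬ K ≤ normalIndexCap G n → L ≤ K) :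
    L ≤ OI G n :=
  le_inf h0 (le_iInf fun K => le_iInf fun hK => hL K hK.1 hK.2.1 hK.2.2)

variable [IsTopologicalGroup G] [CompactSpace G] [T2Space G] [TotallyDisconnectedSpace G]

private lemma exists_openNormal_subset {U : Set G} (hU : IsOpen U) (h1 : (1 : G) ∈ U) :
    ∃ N : Subgroup G, N.Normal ∧ IsOpen (N : Set G) ∧ (N : Set G) ⊆ U := by
  obtain ⟨V, hV, h1V, hVU⟩ := compact_exists_isClopen_in_isOpen hU h1
  obtain ⟨N, hN⟩ := IsTopologicalGroup.exist_openNormalSubgroup_sub_clopen_nhds_of_one hV h1V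
  exact ⟨N.toSubgroup, N.isNormal', N.toOpenSubgroup.isOpen, fun x hx => hVU (hN hx)⟩

private lemma exists_not_mem_normalIndexCap {x : G} (hx : x ≠ 1) :
    ∃ n : ℕ, x ∉ normalIndexCap G n := by
  obtain ⟨N, hNn, hNo, hNU⟩ := exists_openNormal_subset
    (isOpen_compl_singleton (x := x)) (Set.mem_compl_singleton_iff.2 (Ne.symm hx))
  refine ⟨N.index, fun hxmem => ?_⟩
  exact Set.mem_compl_singleton_iff.1 (hNU (normalIndexCap_le hNn hNo le_rfl hxmem)) rfl

private lemma isOpen_saturated {W : Subgroup G} (hW : IsOpen (W : Set G)) {S : Set G}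
    (hsat : ∀ x ∈ S, ∀ w ∈ W, x * w ∈ S) : IsOpen S := by
  rw [isOpen_iff_forall_mem_open]
  intro x hx
  refine ⟨(fun w => x * w) '' W, ?_, ?_, ⟨1, W.one_mem, mul_one x⟩⟩
  · rintro y ⟨w, hw, rfl⟩; exact hsat x hx w hw
  · exact (Homeomorph.mulLeft x).isOpen_image.2 hW

private lemma isClosed_saturated {W : Subgroup G} (hW : IsOpen (W : Set G)) {S : Set G}
    (hsat : ∀ x ∈ S, ∀ w ∈ W, x * w ∈ S) : IsClosed S := by
  rw [← isOpen_compl_iff]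
  apply isOpen_saturated hW
  intro x hx w hw hxw
  exact hx (by simpa [mul_assoc] using hsat _ hxw w⁻¹ (W.inv_mem hw))

private lemma mem_of_forall_mul_openNormal (H₀ : Subgroup G) (hH₀ : IsOpen (H₀ : Set G))
    {J : Set G} (hJ : IsClosed J) {z : G}
    (hz : ∀ W : Subgroup G, W.Normal → IsOpen (W : Set G) → W ≤ H₀ → z ∈ J * (W : Set G)) :
    z ∈ J := by
  rw [← hJ.closure_eq, mem_closure_iff]
  intro o ho hzo
  have h1 : (1 : G) ∈ (fun w => z * w) ⁻¹' o ∩ (H₀ : Set G) := ⟨by simpa using hzo, H₀.one_mem⟩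
  obtain ⟨W, hWn, hWo, hWsub⟩ := exists_openNormal_subset
    (((continuous_mul_left z).isOpen_preimage o ho).inter hH₀) h1
  have hWle : W ≤ H₀ := fun g hg => (hWsub hg).2
  obtain ⟨j, hj, w, hw, hjw⟩ := hz W hWn hWo hWle
  refine ⟨j, ?_, hj⟩
  have hjz : j = z * w⁻¹ := by rw [← hjw]; group
  rw [hjz]
  exact (hWsub (W.inv_mem hw)).1

end Helpers

/-- Theorem C (i): if `G` is a just infinite profinite group and `H` is a closed
subgroup of index `h`, then `ob_G(hn) ≤ h ⬝ ob_H(n)` for all sufficiently large `n`. -/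
theorem obFun_le_of_subgroup (G : Type*) [Group G] [TopologicalSpace G]
    [IsTopologicalGroup G] [CompactSpace G] [T2Space G] [TotallyDisconnectedSpace G]
    (hG : JustInfinite G) (H : Subgroup G) (hHcl : IsClosed (H : Set G))
    (h : ℕ) (hh : H.index = h) (hfin : H.FiniteIndex) :
    ∃ n₀ : ℕ, ∀ n : ℕ, n₀ ≤ n →
      obFun G (h * n) ≤ (h : Cardinal) * obFun ↥H n := by
  classical
  obtain ⟨hGinf, hJI⟩ := hG
  haveI := hfin
  have hh0 : h ≠ 0 := hh ▸ hfin.index_ne_zero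
  have hHopen : IsOpen (H : Set G) := Subgroup.isOpen_of_isClosed_of_finiteIndex H hHcl
  haveI hHcpt : CompactSpace ↥H := isCompact_iff_compactSpace.mp hHcl.isCompact
  have hq : Cardinal.mk (G ⧸ H) = (h : Cardinal) := by
    haveI : Finite (G ⧸ H) := Subgroup.finite_quotient_of_finiteIndex
    haveI := Fintype.ofFinite (G ⧸ H)
    rw [Cardinal.mk_fintype, ← Nat.card_eq_fintype_card, ← Subgroup.index_eq_card, hh]
  -- the closed normal closure of a point
  set NN : G → Subgroup G := fun x => (Subgroup.normalClosure ({x} : Set G)).topologicalClosure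
    with hNNdef
  have hNnormal : ∀ x, (NN x).Normal := fun x => Subgroup.is_normal_topologicalClosure _
  have hNclosed : ∀ x, IsClosed ((NN x : Set G)) := fun x => Subgroup.isClosed_topologicalClosure _
  have hNmem : ∀ x, x ∈ NN x := fun x =>
    Subgroup.le_topologicalClosure _ (Subgroup.subset_normalClosure rfl)
  have hNle : ∀ (x : G) (M : Subgroup G), M.Normal → IsClosed (M : Set G) → x ∈ M →
      NN x ≤ M := by
    intro x M hMn hMc hxM
    haveI := hMn
    refine Subgroup.topologicalClosure_minimal _ (Subgroup.normalClosure_le_normal ?_) hMc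
    intro y hy
    rw [Set.mem_singleton_iff] at hy
    exact hy ▸ hxM
  have hNopen : ∀ x : G, x ≠ 1 → IsOpen ((NN x : Set G)) := by
    intro x hx
    haveI : (NN x).FiniteIndex := hJI _ (hNnormal x) (hNclosed x)
      (fun hb => hx (by simpa [hb, Subgroup.mem_bot] using hNmem x))
    exact Subgroup.isOpen_of_isClosed_of_finiteIndex _ (hNclosed x)
  have hNmul : ∀ (x w : G) (W : Subgroup G), W.Normal → IsOpen (W : Set G) → w ∈ W →
      NN (x * w) ≤ NN x ⊔ W := by
    intro x w W hWn hWo hw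
    haveI := hWn
    haveI := hNnormal x
    refine Subgroup.topologicalClosure_minimal _ (Subgroup.normalClosure_le_normal ?_)
      (Subgroup.isClosed_of_isOpen _ (Subgroup.isOpen_mono le_sup_right hWo))
    intro y hy
    rw [Set.mem_singleton_iff] at hy
    subst hy
    exact Subgroup.mul_mem _ (Subgroup.mem_sup_left (hNmem x)) (Subgroup.mem_sup_right hw)
  -- the images in G of the caps of H
  set Jf : ℕ → Subgroup G := fun n => Subgroup.map H.subtype (normalIndexCap ↥H n) with hJfdef
  have hJclosed : ∀ n, IsClosed ((Jf n : Set G)) := by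
    intro n
    have hcap : IsClosed ((normalIndexCap ↥H n : Set ↥H)) :=
      isClosed_biInf _ (fun K hK => hK.2.1)
    have him : (Jf n : Set G) = (H.subtype) '' ((normalIndexCap ↥H n : Set ↥H)) :=
      Subgroup.coe_map _ _
    rw [him]
    exact (hcap.isCompact.image (by exact continuous_subtype_val)).isClosed
  have hJanti : ∀ {m n : ℕ}, m ≤ n → Jf n ≤ Jf m := fun hmn =>
    Subgroup.map_mono (normalIndexCap_anti hmn)
  -- the bad sets
  set XX : ℕ → Set G := fun n =>
    (H : Set G)ᶜ ∩ ⋂ (W : Subgroup G) (_ : W.Normal ∧ IsOpen (W : Set G) ∧ W ≤ H),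
      {x : G | ((NN x ⊓ H : Subgroup G) : Set G) ⊆ (Jf n : Set G) * (W : Set G)} with hXXdef
  have hXclosed : ∀ n, IsClosed (XX n) := by
    intro n
    refine hHopen.isClosed_compl.inter (isClosed_iInter fun W => isClosed_iInter fun hW => ?_)
    haveI := hW.1
    refine isClosed_saturated hW.2.1 ?_
    intro x hx w hw g hg
    obtain ⟨hgN, hgH⟩ := Subgroup.mem_inf.1 (SetLike.mem_coe.1 hg)
    have hgNW : g ∈ ((NN x ⊔ W : Subgroup G) : Set G) :=
      SetLike.mem_coe.2 (hNmul x w W hW.1 hW.2.1 hw hgN)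
    rw [Subgroup.mul_normal] at hgNW
    obtain ⟨a, ha, w', hw', haw0⟩ := hgNW
    have haw : a * w' = g := haw0
    have haH : a ∈ H := by
      have ha2 : a = g * w'⁻¹ := by rw [← haw]; group
      rw [ha2]; exact H.mul_mem hgH (H.inv_mem (hW.2.2 hw'))
    have haJ : a ∈ (Jf n : Set G) * (W : Set G) :=
      hx (SetLike.mem_coe.2 (Subgroup.mem_inf.2 ⟨SetLike.mem_coe.1 ha, haH⟩))
    obtain ⟨j, hj, w₂, hw₂, hjw0⟩ := haJ
    have hjw : j * w₂ = a := hjw0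
    refine ⟨j, hj, w₂ * w', W.mul_mem (SetLike.mem_coe.1 hw₂) hw', ?_⟩
    show j * (w₂ * w') = g
    rw [← mul_assoc, hjw]; exact haw
  have hXdec : ∀ {m n : ℕ}, m ≤ n → XX n ⊆ XX m := by
    intro m n hmn x hx
    refine ⟨hx.1, ?_⟩
    rw [Set.mem_iInter₂]
    intro W hW
    have hx2 := Set.mem_iInter₂.1 hx.2 W hW
    intro g hg
    obtain ⟨j, hj, w, hw, hjw⟩ := hx2 hg
    exact ⟨j, SetLike.mem_coe.2 (hJanti hmn (SetLike.mem_coe.1 hj)), w, hw, hjw⟩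
  have hXempty : ∃ m : ℕ, XX m = ∅ := by
    by_contra hc
    push_neg at hc
    have hne : ∀ m, (XX m).Nonempty := hc
    obtain ⟨x, hx⟩ := IsCompact.nonempty_iInter_of_sequence_nonempty_isCompact_isClosed XX
      (fun i => hXdec (Nat.le_succ i)) hne ((hXclosed 0).isCompact) hXclosed
    rw [Set.mem_iInter] at hx
    have hxH : x ∉ H := (hx 0).1
    have hx1 : x ≠ 1 := fun hx1 => hxH (hx1 ▸ H.one_mem)
    have hcap : ∀ n : ℕ, (NN x ⊓ H : Subgroup G) ≤ Jf n := by
      intro n z hz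
      have hzJW : ∀ W : Subgroup G, W.Normal → IsOpen (W : Set G) → W ≤ H →
          z ∈ (Jf n : Set G) * (W : Set G) := by
        intro W h1 h2 h3
        exact Set.mem_iInter₂.1 (hx n).2 W ⟨h1, h2, h3⟩ (SetLike.mem_coe.2 hz)
      exact SetLike.mem_coe.1 (mem_of_forall_mul_openNormal H hHopen (hJclosed n) hzJW)
    have hbot : (NN x ⊓ H : Subgroup G) = ⊥ := by
      rw [eq_bot_iff]
      intro y hy
      rw [Subgroup.mem_bot]
      by_contra hy1
      have hyH : y ∈ H := (Subgroup.mem_inf.1 hy).2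
      obtain ⟨n, hn⟩ := exists_not_mem_normalIndexCap (G := ↥H)
        (x := (⟨y, hyH⟩ : ↥H)) (fun hc1 => hy1 (congrArg Subtype.val hc1))
      have hyJ := hcap n hy
      rw [hJfdef] at hyJ
      obtain ⟨u, hu, huy⟩ := Subgroup.mem_map.1 hyJ
      have hu2 : u = ⟨y, hyH⟩ := Subtype.ext huy
      exact hn (hu2 ▸ hu)
    have hNHopen : IsOpen ((NN x ⊓ H : Subgroup G) : Set G) := by
      rw [Subgroup.coe_inf]
      exact (hNopen x hx1).inter hHopen
    rw [hbot] at hNHopen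
    haveI : Finite (G ⧸ (⊥ : Subgroup G)) := Subgroup.quotient_finite_of_isOpen _ hNHopen
    have hfinG : Finite G := Finite.of_equiv _ (QuotientGroup.quotientBot (G := G)).toEquiv
    exact absurd hfinG (@Infinite.not_finite G hGinf)
  obtain ⟨n₃, hXem⟩ := hXempty
  have hXemptyAll : ∀ n, n₃ ≤ n → XX n = ∅ := fun n hn =>
    Set.subset_empty_iff.1 (hXem ▸ hXdec hn)
  -- P1 : deep oblique normal subgroups don't exist at levels ≥ n₃
  have hP1 : ∀ n, n₃ ≤ n → ∀ M : Subgroup G, M.Normal → IsOpen (M : Set G) → ¬ M ≤ H →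
      ¬ (M.subgroupOf H ≤ normalIndexCap ↥H n) := by
    intro n hn M hMn hMo hMH hMcap
    obtain ⟨x, hxM, hxH⟩ := SetLike.not_le_iff_exists.1 hMH
    have hxX : x ∈ XX n := by
      refine ⟨hxH, ?_⟩
      rw [Set.mem_iInter₂]
      intro W hW z hz
      have h1 : NN x ⊓ H ≤ M ⊓ H :=
        inf_le_inf_right _ (hNle x M hMn (Subgroup.isClosed_of_isOpen _ hMo) hxM)
      have h2 : M ⊓ H = Subgroup.map H.subtype (M.subgroupOf H) :=
        (Subgroup.subgroupOf_map_subtype _ _).symm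
      have h3 : Subgroup.map H.subtype (M.subgroupOf H) ≤ Jf n := Subgroup.map_mono hMcap
      have hzJ : z ∈ Jf n := h3 (h2 ▸ h1 (SetLike.mem_coe.1 hz))
      exact ⟨z, SetLike.mem_coe.2 hzJ, 1, W.one_mem, mul_one z⟩
    rw [hXemptyAll n hn] at hxX
    exact hxX
  by_cases hEx : ∃ n', n₃ ≤ n' ∧ OI ↥H n' ≠ ⊥
  · -- D is open, full containment
    obtain ⟨n', hn'3, hOIne⟩ := hEx
    set D : Subgroup G := ⨅ (K : Subgroup G) (_ : K.Normal ∧ IsOpen (K : Set G) ∧ ¬ K ≤ H), K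
      with hDdef
    have hDle : ∀ K : Subgroup G, K.Normal → IsOpen (K : Set G) → ¬ K ≤ H → D ≤ K :=
      fun K h1 h2 h3 => iInf₂_le K ⟨h1, h2, h3⟩
    have hOIK : ∀ (m : ℕ), n₃ ≤ m → ∀ K : Subgroup G, K.Normal → IsOpen (K : Set G) →
        ¬ K ≤ H → Subgroup.map H.subtype (OI ↥H m) ≤ K := by
      intro m hm K h1 h2 h3
      haveI := h1
      have h4 : OI ↥H m ≤ K.subgroupOf H :=
        OI_le_constraint inferInstance (Subgroup.subgroupOf_isOpen _ _ h2) (hP1 m hm K h1 h2 h3)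
      calc Subgroup.map H.subtype (OI ↥H m) ≤ Subgroup.map H.subtype (K.subgroupOf H) :=
            Subgroup.map_mono h4
        _ = K ⊓ H := Subgroup.subgroupOf_map_subtype _ _
        _ ≤ K := inf_le_left
    have hLD : Subgroup.map H.subtype (OI ↥H n') ≤ D :=
      le_iInf fun K => le_iInf fun hK => hOIK n' hn'3 K hK.1 hK.2.1 hK.2.2
    have hDne : D ≠ ⊥ := by
      intro hb
      apply hOIne
      have hmb : Subgroup.map H.subtype (OI ↥H n') = ⊥ := le_bot_iff.1 (hb ▸ hLD)
      exact ((OI ↥H n').map_eq_bot_iff_of_injective H.subtype_injective).1 hmb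
    have hDnormal : D.Normal := normal_biInf _ (fun K hK => hK.1)
    have hDclosed : IsClosed (D : Set G) := isClosed_biInf _ (fun K hK => hK.2.1)
    haveI hDfin : D.FiniteIndex := hJI D hDnormal hDclosed hDne
    have hDopen : IsOpen (D : Set G) := Subgroup.isOpen_of_isClosed_of_finiteIndex D hDclosed
    have hDHopen : IsOpen ((D.subgroupOf H : Subgroup ↥H) : Set ↥H) :=
      Subgroup.subgroupOf_isOpen _ _ hDopen
    haveI hDnormal' := hDnormal
    have hDHnormal : (D.subgroupOf H).Normal := inferInstance
    have hcapD : ∀ m : ℕ, (D.subgroupOf H).index ≤ m →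
        normalIndexCap ↥H m ≤ D.subgroupOf H :=
      fun m hm => normalIndexCap_le hDHnormal hDHopen hm
    have hCONT : ∀ n : ℕ, (D.subgroupOf H).index ≤ n →
        Subgroup.map H.subtype (OI ↥H n) ≤ OI G (h * n) := by
      intro n hn
      have hcapDn := hcapD n hn
      have hcapM : ∀ M : Subgroup G, M.Normal → IsOpen (M : Set G) → M.index ≤ h * n →
          M ≤ H → normalIndexCap ↥H n ≤ M.subgroupOf H := by
        intro M hMn hMo hMi hMH
        haveI := hMn
        refine normalIndexCap_le inferInstance (Subgroup.subgroupOf_isOpen _ _ hMo) ?_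
        have hrel : M.relIndex H * h = M.index := by
          rw [← hh]; exact Subgroup.relIndex_mul_index hMH
        have h5 : M.relIndex H * h ≤ n * h := by rw [hrel, mul_comm]; exact hMi
        exact Nat.le_of_mul_le_mul_right h5 (Nat.pos_of_ne_zero hh0)
      have hMle : ∀ M : Subgroup G, M.Normal → IsOpen (M : Set G) → M.index ≤ h * n →
          Subgroup.map H.subtype (OI ↥H n) ≤ M := by
        intro M h1 h2 h3
        by_cases hMH : M ≤ H
        · calc Subgroup.map H.subtype (OI ↥H n)
              ≤ Subgroup.map H.subtype (normalIndexCap ↥H n) := Subgroup.map_mono (OI_le_cap n)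
            _ ≤ Subgroup.map H.subtype (M.subgroupOf H) :=
                Subgroup.map_mono (hcapM M h1 h2 h3 hMH)
            _ = M ⊓ H := Subgroup.subgroupOf_map_subtype _ _
            _ ≤ M := inf_le_left
        · calc Subgroup.map H.subtype (OI ↥H n)
              ≤ Subgroup.map H.subtype (normalIndexCap ↥H n) := Subgroup.map_mono (OI_le_cap n)
            _ ≤ Subgroup.map H.subtype (D.subgroupOf H) := Subgroup.map_mono hcapDn
            _ = D ⊓ H := Subgroup.subgroupOf_map_subtype _ _
            _ ≤ D := inf_le_left
            _ ≤ M := hDle M h1 h2 hMH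
      have hvac : ∀ K : Subgroup G, K ≤ H → K.subgroupOf H ≤ normalIndexCap ↥H n →
          K ≤ normalIndexCap G (h * n) := by
        intro K hKH hKcap
        have hKeq : Subgroup.map H.subtype (K.subgroupOf H) = K := by
          rw [Subgroup.subgroupOf_map_subtype]; exact inf_eq_left.2 hKH
        refine le_normalIndexCap ?_
        intro M h1 h2 h3
        by_cases hMH : M ≤ H
        · calc K = Subgroup.map H.subtype (K.subgroupOf H) := hKeq.symm
            _ ≤ Subgroup.map H.subtype (M.subgroupOf H) :=
                Subgroup.map_mono (hKcap.trans (hcapM M h1 h2 h3 hMH))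
            _ = M ⊓ H := Subgroup.subgroupOf_map_subtype _ _
            _ ≤ M := inf_le_left
        · calc K = Subgroup.map H.subtype (K.subgroupOf H) := hKeq.symm
            _ ≤ Subgroup.map H.subtype (D.subgroupOf H) :=
                Subgroup.map_mono (hKcap.trans hcapDn)
            _ = D ⊓ H := Subgroup.subgroupOf_map_subtype _ _
            _ ≤ D := inf_le_left
            _ ≤ M := hDle M h1 h2 hMH
      refine le_OI (le_normalIndexCap (fun M h1 h2 h3 => hMle M h1 h2 h3)) ?_
      intro K h1 h2 h3
      by_cases hKH : K ≤ H
      · by_cases hKcap : K.subgroupOf H ≤ normalIndexCap ↥H n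
        · exact absurd (hvac K hKH hKcap) h3
        · haveI := h1
          have h4 : OI ↥H n ≤ K.subgroupOf H :=
            OI_le_constraint inferInstance (Subgroup.subgroupOf_isOpen _ _ h2) hKcap
          calc Subgroup.map H.subtype (OI ↥H n)
              ≤ Subgroup.map H.subtype (K.subgroupOf H) := Subgroup.map_mono h4
            _ = K ⊓ H := Subgroup.subgroupOf_map_subtype _ _
            _ ≤ K := inf_le_left
      · calc Subgroup.map H.subtype (OI ↥H n)
            ≤ Subgroup.map H.subtype (normalIndexCap ↥H n) := Subgroup.map_mono (OI_le_cap n)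
          _ ≤ Subgroup.map H.subtype (D.subgroupOf H) := Subgroup.map_mono hcapDn
          _ = D ⊓ H := Subgroup.subgroupOf_map_subtype _ _
          _ ≤ D := inf_le_left
          _ ≤ K := hDle K h1 h2 hKH
    refine ⟨max n₃ ((D.subgroupOf H).index), fun n hn => ?_⟩
    have hn2 : (D.subgroupOf H).index ≤ n := le_trans (le_max_right _ _) hn
    have hle := hCONT n hn2
    have hs1 : obFun G (h * n) ≤ Cardinal.mk (G ⧸ Subgroup.map H.subtype (OI ↥H n)) := by
      refine Cardinal.mk_le_of_surjective (f := Subgroup.quotientMapOfLE hle) ?_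
      intro q
      refine Quotient.inductionOn' q fun g => ⟨QuotientGroup.mk g, rfl⟩
    have hAH : Subgroup.map H.subtype (OI ↥H n) ≤ H := Subgroup.map_subtype_le _
    have hAsub : (Subgroup.map H.subtype (OI ↥H n)).subgroupOf H = OI ↥H n :=
      Subgroup.comap_map_eq_self_of_injective H.subtype_injective _
    calc obFun G (h * n) ≤ Cardinal.mk (G ⧸ Subgroup.map H.subtype (OI ↥H n)) := hs1
      _ = Cardinal.mk ((G ⧸ H) × (↥H ⧸ (Subgroup.map H.subtype (OI ↥H n)).subgroupOf H)) :=
          Cardinal.mk_congr (Subgroup.quotientEquivProdOfLE hAH)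
      _ = Cardinal.mk (G ⧸ H) *
          Cardinal.mk (↥H ⧸ (Subgroup.map H.subtype (OI ↥H n)).subgroupOf H) := by
          simp [Cardinal.mk_prod]
      _ = (h : Cardinal) * obFun ↥H n := by rw [hq, hAsub]; rfl
  · push_neg at hEx
    refine ⟨n₃, fun n hn => ?_⟩
    have hOIbot : OI ↥H n = ⊥ := hEx n hn
    have hGmk : Cardinal.mk G = (h : Cardinal) * Cardinal.mk ↥H := by
      rw [Cardinal.mk_congr (Subgroup.groupEquivQuotientProdSubgroup (s := H))]
      simp [Cardinal.mk_prod, hq]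
    have hRHS : (h : Cardinal) * obFun ↥H n = (h : Cardinal) * Cardinal.mk ↥H := by
      unfold obFun
      rw [hOIbot, Cardinal.mk_congr (QuotientGroup.quotientBot (G := ↥H)).toEquiv]
    rw [hRHS, ← hGmk]
    exact Cardinal.mk_quotient_le
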